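/- For each fixed β ∈ (0,1) and each positive rational q, there exists a unique value Â₁ ∈ (0, 1/(1+β)) such that q·T₁(β,Â₁) = T₂(β,Â₁). -/

import Mathlib

open Real Filter Topology MeasureTheory intervalIntegral Set

/-- The complete elliptic integral of the first kind,
`K(κ) = ∫₀¹ dv / √((1 - v²)(1 - κ² v²))`. -/
noncomputable def K (κ : ℝ) : ℝ :=
  ∫ v in (0:ℝ)..1, 1 / Real.sqrt ((1 - v ^ 2) * (1 - κ ^ 2 * v ^ 2))

namespace EllAux

noncomputable def f (κ v : ℝ) : ℝ := 1 / Real.sqrt ((1 - v ^ 2) * (1 - κ ^ 2 * v ^ 2))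

lemma K_def (κ : ℝ) : K κ = ∫ v in (0:ℝ)..1, f κ v := rfl

lemma f_nonneg (κ v : ℝ) : 0 ≤ f κ v := by unfold f; positivity

lemma D_pos {κ v : ℝ} (h1 : κ < 1) (hv0 : 0 ≤ v) (hv1 : v < 1) (h0 : 0 ≤ κ) :
    0 < (1 - v ^ 2) * (1 - κ ^ 2 * v ^ 2) := by
  have hv2 : v ^ 2 < 1 := by nlinarith
  have hk2 : κ ^ 2 * v ^ 2 < 1 := by nlinarith [sq_nonneg κ, sq_nonneg v]
  exact mul_pos (by linarith) (by linarith)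

lemma f_meas (κ : ℝ) : Measurable (f κ) := by
  have hc : Continuous fun v : ℝ => Real.sqrt ((1 - v ^ 2) * (1 - κ ^ 2 * v ^ 2)) := by
    fun_prop
  have h2 : Measurable fun v : ℝ => (Real.sqrt ((1 - v ^ 2) * (1 - κ ^ 2 * v ^ 2)))⁻¹ :=
    hc.measurable.inv
  unfold f
  simp only [one_div]
  exact h2

lemma f_le_bound {b κ v : ℝ} (hκ : κ ^ 2 ≤ b ^ 2) (hb0 : 0 ≤ b) (hb : b < 1)
    (hv : v ∈ Set.Ioc (0:ℝ) 1) :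
    f κ v ≤ (Real.sqrt (1 - b ^ 2))⁻¹ * (1 - v) ^ (-(1/2) : ℝ) := by
  obtain ⟨hv0, hv1⟩ := hv
  rcases eq_or_lt_of_le hv1 with rfl | hlt
  · have : f κ 1 = 0 := by simp [f]
    rw [this]
    positivity
  · have hb2 : 0 < 1 - b ^ 2 := by nlinarith
    have hvpos : (0:ℝ) < 1 - v := by linarith
    have hD : 0 < (1 - v) * (1 - b ^ 2) := mul_pos hvpos hb2
    have hle : (1 - v) * (1 - b ^ 2) ≤ (1 - v ^ 2) * (1 - κ ^ 2 * v ^ 2) := by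
      have e1 : 1 - v ≤ 1 - v ^ 2 := by nlinarith
      have e2 : 1 - b ^ 2 ≤ 1 - κ ^ 2 * v ^ 2 := by
        nlinarith [mul_nonneg (sub_nonneg.2 hκ) (sq_nonneg v), mul_nonneg (sq_nonneg b) (sq_nonneg v)]
      exact mul_le_mul e1 e2 (by linarith) (by nlinarith)
    have h1 : f κ v ≤ 1 / Real.sqrt ((1 - v) * (1 - b ^ 2)) :=
      one_div_le_one_div_of_le (Real.sqrt_pos.2 hD) (Real.sqrt_le_sqrt hle)
    refine h1.trans_eq ?_
    rw [Real.sqrt_mul hvpos.le, Real.rpow_neg hvpos.le, ← Real.sqrt_eq_rpow]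
    rw [one_div, mul_inv, mul_comm]

lemma bound_integrable (b : ℝ) :
    IntervalIntegrable (fun v : ℝ => (Real.sqrt (1 - b ^ 2))⁻¹ * (1 - v) ^ (-(1/2) : ℝ))
      volume 0 1 := by
  apply IntervalIntegrable.const_mul
  have h := (intervalIntegrable_rpow' (a := (0:ℝ)) (b := 1) (r := -(1/2)) (by norm_num)).comp_sub_left 1
  norm_num at h
  exact h.symm

lemma f_integrable {κ : ℝ} (h0 : 0 ≤ κ) (h1 : κ < 1) :
    IntervalIntegrable (f κ) volume 0 1 := by
  refine (bound_integrable κ).mono_fun' ((f_meas κ).aestronglyMeasurable) ?_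
  filter_upwards [MeasureTheory.ae_restrict_mem measurableSet_uIoc] with v hv
  rw [Set.uIoc_of_le (by norm_num : (0:ℝ) ≤ 1)] at hv
  rw [Real.norm_of_nonneg (f_nonneg κ v)]
  exact f_le_bound le_rfl h0 h1 hv

lemma K_pos {κ : ℝ} (h0 : 0 ≤ κ) (h1 : κ < 1) : 0 < K κ := by
  rw [K_def]
  apply intervalIntegral.intervalIntegral_pos_of_pos_on (f_integrable h0 h1) _ one_pos
  intro v hv
  have := D_pos h1 hv.1.le hv.2 h0
  unfold f
  positivity

lemma K_mono {κ κ' : ℝ} (h0 : 0 ≤ κ) (h : κ ≤ κ') (h1 : κ' < 1) : K κ ≤ K κ' := by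
  rw [K_def, K_def]
  apply intervalIntegral.integral_mono_on (by norm_num)
    (f_integrable h0 (lt_of_le_of_lt h h1)) (f_integrable (h0.trans h) h1)
  intro v hv
  obtain ⟨hv0, hv1⟩ := hv
  rcases eq_or_lt_of_le hv1 with rfl | hlt
  · simp [f]
  · have hD' : 0 < (1 - v ^ 2) * (1 - κ' ^ 2 * v ^ 2) := D_pos h1 hv0 hlt (h0.trans h)
    have hle : (1 - v ^ 2) * (1 - κ' ^ 2 * v ^ 2) ≤ (1 - v ^ 2) * (1 - κ ^ 2 * v ^ 2) := by
      have hv2 : v ^ 2 < 1 := by nlinarith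
      have hk : κ ^ 2 ≤ κ' ^ 2 := by nlinarith
      have := mul_le_mul_of_nonneg_right hk (sq_nonneg v)
      exact mul_le_mul_of_nonneg_left (by linarith) (by nlinarith)
    exact one_div_le_one_div_of_le (Real.sqrt_pos.2 hD') (Real.sqrt_le_sqrt hle)

lemma K_continuousAt {κ₀ : ℝ} (h0 : 0 ≤ κ₀) (h1 : κ₀ < 1) : ContinuousAt K κ₀ := by
  set b : ℝ := (1 + κ₀) / 2 with hbdef
  have hκb : κ₀ < b := by rw [hbdef]; linarith
  have hb0 : 0 < b := by rw [hbdef]; linarith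
  have hb1 : b < 1 := by rw [hbdef]; linarith
  have hK : ∀ κ, K κ = ∫ v in (0:ℝ)..1, f κ v := K_def
  simp only [funext hK]
  apply intervalIntegral.continuousAt_of_dominated_interval
      (bound := fun v : ℝ => (Real.sqrt (1 - b ^ 2))⁻¹ * (1 - v) ^ (-(1/2) : ℝ))
  · exact Eventually.of_forall fun κ => (f_meas κ).aestronglyMeasurable
  · have hmem : Set.Ioo (-b) b ∈ 𝓝 κ₀ := Ioo_mem_nhds (by linarith) hκb
    filter_upwards [hmem] with κ hκ
    filter_upwards [] with v hv
    rw [Set.uIoc_of_le (by norm_num : (0:ℝ) ≤ 1)] at hv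
    rw [Real.norm_of_nonneg (f_nonneg κ v)]
    exact f_le_bound (by nlinarith [hκ.1, hκ.2, abs_nonneg κ]) hb0.le hb1 hv
  · exact bound_integrable b
  · have hne : ∀ᵐ v : ℝ, v ≠ 1 := by
      refine (MeasureTheory.measure_eq_zero_iff_ae_notMem).1 (measure_singleton 1) |>.mono ?_
      intro v hv
      simpa using hv
    filter_upwards [hne] with v hv hmem
    rw [Set.uIoc_of_le (by norm_num : (0:ℝ) ≤ 1)] at hmem
    have hv1 : v < 1 := lt_of_le_of_ne hmem.2 hv
    have hD : 0 < (1 - v ^ 2) * (1 - κ₀ ^ 2 * v ^ 2) := D_pos h1 hmem.1.le hv1 h0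
    have hsq : ContinuousAt (fun κ : ℝ => Real.sqrt ((1 - v ^ 2) * (1 - κ ^ 2 * v ^ 2))) κ₀ := by
      fun_prop
    have := ContinuousAt.div (continuousAt_const : ContinuousAt (fun _ : ℝ => (1:ℝ)) κ₀)
      hsq (ne_of_gt (Real.sqrt_pos.2 hD))
    exact this

lemma K_ge_log {c κ : ℝ} (hc0 : 0 < c) (hc1 : c < 1) (h0 : 0 ≤ κ) (h1 : κ < 1)
    (hκc : 2 - 1 / c ^ 2 ≤ κ ^ 2) : Real.log (1 / (1 - c)) / 4 ≤ K κ := by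
  have hint : IntervalIntegrable (f κ) volume 0 1 := f_integrable h0 h1
  have hint1 : IntervalIntegrable (f κ) volume 0 c := by
    apply hint.mono_set'
    rw [Set.uIoc_of_le hc0.le, Set.uIoc_of_le (by norm_num : (0:ℝ) ≤ 1)]
    exact Set.Ioc_subset_Ioc le_rfl hc1.le
  have hint2 : IntervalIntegrable (f κ) volume c 1 := by
    apply hint.mono_set'
    rw [Set.uIoc_of_le hc1.le, Set.uIoc_of_le (by norm_num : (0:ℝ) ≤ 1)]
    exact Set.Ioc_subset_Ioc hc0.le le_rfl
  have hsplit : K κ = (∫ v in (0:ℝ)..c, f κ v) + ∫ v in c..(1:ℝ), f κ v := by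
    rw [K_def, intervalIntegral.integral_add_adjacent_intervals hint1 hint2]
  have h2 : 0 ≤ ∫ v in c..(1:ℝ), f κ v :=
    intervalIntegral.integral_nonneg hc1.le fun v _ => f_nonneg κ v
  -- lower bound on [0,c]
  have hlow : ∀ v ∈ Set.Icc (0:ℝ) c, (4:ℝ)⁻¹ * (1 - v)⁻¹ ≤ f κ v := by
    intro v hv
    obtain ⟨hv0, hvc⟩ := hv
    have hv1 : v < 1 := lt_of_le_of_lt hvc hc1
    have hD : 0 < (1 - v ^ 2) * (1 - κ ^ 2 * v ^ 2) := D_pos h1 hv0 hv1 h0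
    have hvv : v ^ 2 / c ^ 2 ≤ 1 := by
      rw [div_le_one (by positivity)]
      nlinarith
    have hkv : 2 * v ^ 2 - 1 ≤ κ ^ 2 * v ^ 2 := by
      have := mul_le_mul_of_nonneg_right hκc (sq_nonneg v)
      have heq : (2 - 1 / c ^ 2) * v ^ 2 = 2 * v ^ 2 - v ^ 2 / c ^ 2 := by ring
      nlinarith
    have hD16 : (1 - v ^ 2) * (1 - κ ^ 2 * v ^ 2) ≤ (4 * (1 - v)) ^ 2 := by
      have ha : 1 - κ ^ 2 * v ^ 2 ≤ 2 * (1 - v ^ 2) := by linarith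
      have hb' : (0:ℝ) ≤ 1 - v ^ 2 := by nlinarith
      have hc' : (1 - v ^ 2) * (1 - κ ^ 2 * v ^ 2) ≤ (1 - v ^ 2) * (2 * (1 - v ^ 2)) :=
        mul_le_mul_of_nonneg_left ha hb'
      have he : (1 + v) ^ 2 ≤ 4 := by nlinarith
      nlinarith [mul_le_mul_of_nonneg_left he (sq_nonneg (1 - v))]
    have hsq : Real.sqrt ((1 - v ^ 2) * (1 - κ ^ 2 * v ^ 2)) ≤ 4 * (1 - v) := by
      rw [show 4 * (1 - v) = Real.sqrt ((4 * (1 - v)) ^ 2) from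
        (Real.sqrt_sq (by linarith)).symm]
      exact Real.sqrt_le_sqrt hD16
    have := one_div_le_one_div_of_le (Real.sqrt_pos.2 hD) hsq
    unfold f
    calc (4:ℝ)⁻¹ * (1 - v)⁻¹ = 1 / (4 * (1 - v)) := by rw [one_div, mul_inv]
    _ ≤ _ := this
  have hcont : ContinuousOn (fun v : ℝ => (4:ℝ)⁻¹ * (1 - v)⁻¹) (Set.uIcc 0 c) := by
    rw [Set.uIcc_of_le hc0.le]
    apply ContinuousOn.mul continuousOn_const
    apply ContinuousOn.inv₀ (by fun_prop)
    intro v hv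
    have : v ≤ c := hv.2
    intro h
    have : v = 1 := by linarith [sub_eq_zero.1 h]
    linarith
  have hmono : (∫ v in (0:ℝ)..c, (4:ℝ)⁻¹ * (1 - v)⁻¹) ≤ ∫ v in (0:ℝ)..c, f κ v := by
    apply intervalIntegral.integral_mono_on hc0.le (hcont.intervalIntegrable) hint1
    intro v hv
    exact hlow v hv
  have hcomp : (∫ v in (0:ℝ)..c, (1 - v)⁻¹) = Real.log (1 / (1 - c)) := by
    have h3 : (∫ v in (0:ℝ)..c, (fun u : ℝ => u⁻¹) (1 - v)) =
        ∫ u in (1 - c)..(1 - 0 : ℝ), u⁻¹ := intervalIntegral.integral_comp_sub_left _ 1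
    simp only at h3
    rw [h3, show (1 - (0:ℝ)) = 1 by norm_num]
    have h0c : (0:ℝ) ∉ Set.uIcc (1 - c) 1 := by
      rw [Set.uIcc_of_le (by linarith)]
      intro hm
      linarith [hm.1]
    rw [integral_inv h0c]
  have hval : (∫ v in (0:ℝ)..c, (4:ℝ)⁻¹ * (1 - v)⁻¹) = Real.log (1 / (1 - c)) / 4 := by
    rw [intervalIntegral.integral_const_mul, hcomp]
    ring
  linarith [hmono, h2, hval ▸ hmono]

end EllAux

/-- The modulus `κ₁(β, A₁)`, defined by
`κ₁² = (A₁(1-β) + √(1-4βA₁²)) / (2√(1-4βA₁²))`. -/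
noncomputable def κ₁ (β A₁ : ℝ) : ℝ :=
  Real.sqrt ((A₁ * (1 - β) + Real.sqrt (1 - 4 * β * A₁ ^ 2)) /
    (2 * Real.sqrt (1 - 4 * β * A₁ ^ 2)))

namespace EllAux2
open EllAux

noncomputable def E (β A : ℝ) : ℝ :=
  (A * (1 - β) + Real.sqrt (1 - 4 * β * A ^ 2)) / (2 * Real.sqrt (1 - 4 * β * A ^ 2))

lemma κ₁_eq (β A : ℝ) : κ₁ β A = Real.sqrt (E β A) := rfl

variable {β : ℝ} (hβ0 : 0 < β) (hβ1 : β < 1)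
include hβ0 hβ1

lemma s_pos {A : ℝ} (hA0 : 0 ≤ A) (hAL : A ≤ 1 / (1 + β)) : 0 < 1 - 4 * β * A ^ 2 := by
  have h1 : (0:ℝ) < 1 + β := by linarith
  have h2 : A * (1 + β) ≤ 1 := by rwa [← le_div_iff₀ h1]
  rcases eq_or_lt_of_le hA0 with rfl | hA
  · norm_num
  · have h3 : 0 < A ^ 2 * (1 - β) ^ 2 := mul_pos (pow_pos hA 2) (pow_pos (by linarith) 2)
    nlinarith [mul_le_mul h2 h2 (mul_nonneg hA.le h1.le) (by norm_num : (0:ℝ) ≤ 1)]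

lemma E_nonneg {A : ℝ} (hA0 : 0 ≤ A) (hAL : A ≤ 1 / (1 + β)) : 0 ≤ E β A := by
  have hs := s_pos hβ0 hβ1 hA0 hAL
  have h1 : 0 ≤ A * (1 - β) := mul_nonneg hA0 (by linarith)
  have h2 : 0 ≤ Real.sqrt (1 - 4 * β * A ^ 2) := Real.sqrt_nonneg _
  exact div_nonneg (by linarith) (by linarith)

lemma κ₁_sq {A : ℝ} (hA0 : 0 ≤ A) (hAL : A ≤ 1 / (1 + β)) : κ₁ β A ^ 2 = E β A := by
  rw [κ₁_eq]
  exact Real.sq_sqrt (E_nonneg hβ0 hβ1 hA0 hAL)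

lemma E_lt_one {A : ℝ} (hA0 : 0 ≤ A) (hAL : A < 1 / (1 + β)) : E β A < 1 := by
  have h1 : (0:ℝ) < 1 + β := by linarith
  have hs := s_pos hβ0 hβ1 hA0 hAL.le
  have hsq : 0 < Real.sqrt (1 - 4 * β * A ^ 2) := Real.sqrt_pos.2 hs
  rw [E, div_lt_one (by positivity)]
  have h2 : A * (1 + β) < 1 := by rwa [← lt_div_iff₀ h1]
  have h3 : A * (1 - β) < Real.sqrt (1 - 4 * β * A ^ 2) := by
    rw [Real.lt_sqrt (mul_nonneg hA0 (by linarith))]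
    nlinarith [mul_le_mul_of_nonneg_left h2.le (mul_nonneg hA0 h1.le), mul_nonneg hA0 hA0]
  linarith

lemma κ₁_lt_one {A : ℝ} (hA0 : 0 ≤ A) (hAL : A < 1 / (1 + β)) : κ₁ β A < 1 := by
  rw [κ₁_eq]
  have h := Real.sqrt_lt_sqrt (E_nonneg hβ0 hβ1 hA0 hAL.le) (E_lt_one hβ0 hβ1 hA0 hAL)
  simpa using h

lemma E_mono {A A' : ℝ} (hA0 : 0 ≤ A) (hAA : A ≤ A') (hAL : A' ≤ 1 / (1 + β)) :
    E β A ≤ E β A' := by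
  have hs' := s_pos hβ0 hβ1 (hA0.trans hAA) hAL
  have hs := s_pos hβ0 hβ1 hA0 (hAA.trans hAL)
  have hsq : 0 < Real.sqrt (1 - 4 * β * A ^ 2) := Real.sqrt_pos.2 hs
  have hsq' : 0 < Real.sqrt (1 - 4 * β * A' ^ 2) := Real.sqrt_pos.2 hs'
  have hss : Real.sqrt (1 - 4 * β * A' ^ 2) ≤ Real.sqrt (1 - 4 * β * A ^ 2) := by
    apply Real.sqrt_le_sqrt
    nlinarith [mul_self_le_mul_self hA0 hAA]
  rw [E, E, div_le_div_iff₀ (by positivity) (by positivity)]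
  have h1 : A * Real.sqrt (1 - 4 * β * A' ^ 2) ≤ A' * Real.sqrt (1 - 4 * β * A ^ 2) :=
    le_trans (mul_le_mul_of_nonneg_left hss hA0)
      (mul_le_mul_of_nonneg_right hAA hsq.le)
  nlinarith [mul_le_mul_of_nonneg_left h1 (by linarith : (0:ℝ) ≤ 1 - β)]

lemma κ₁_mono {A A' : ℝ} (hA0 : 0 ≤ A) (hAA : A ≤ A') (hAL : A' ≤ 1 / (1 + β)) :
    κ₁ β A ≤ κ₁ β A' := by
  rw [κ₁_eq, κ₁_eq]
  exact Real.sqrt_le_sqrt (E_mono hβ0 hβ1 hA0 hAA hAL)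

lemma E_at_L : E β (1 / (1 + β)) = 1 := by
  have h1 : (0:ℝ) < 1 + β := by linarith
  have h2 : (0:ℝ) < 1 - β := by linarith
  have hsq : 1 - 4 * β * (1 / (1 + β)) ^ 2 = ((1 - β) / (1 + β)) ^ 2 := by
    field_simp
    ring
  rw [E, hsq, Real.sqrt_sq (by positivity)]
  field_simp
  ring

omit hβ0 hβ1 in
lemma E_continuousAt {A₀ : ℝ} (hs : 0 < 1 - 4 * β * A₀ ^ 2) : ContinuousAt (E β) A₀ := by
  have hsq : 0 < Real.sqrt (1 - 4 * β * A₀ ^ 2) := Real.sqrt_pos.2 hs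
  apply ContinuousAt.div (by fun_prop) (by fun_prop)
  positivity

omit hβ0 hβ1 in
lemma κ₁_continuousAt {A₀ : ℝ} (hs : 0 < 1 - 4 * β * A₀ ^ 2) :
    ContinuousAt (fun A => κ₁ β A) A₀ := by
  simp only [κ₁_eq]
  exact Real.continuous_sqrt.continuousAt.comp (E_continuousAt hs)

end EllAux2

/-- The modulus `κ₂(β)`, defined by `κ₂² = β/(1+β)`. -/
noncomputable def κ₂ (β : ℝ) : ℝ := Real.sqrt (β / (1 + β))

/-- The period `T₁(β,A₁) = 2√(2/a) (1-4βA₁²)^{-1/4} K(κ₁(β,A₁))` of the ξ-motion. -/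
noncomputable def T₁ (a β A₁ : ℝ) : ℝ :=
  2 * Real.sqrt (2 / a) / (1 - 4 * β * A₁ ^ 2) ^ ((1:ℝ)/4) * K (κ₁ β A₁)

/-- The period `T₂(β,A₁) = 2/√(a A₁ (1+β)) · K(κ₂(β))` of the φ-motion. -/
noncomputable def T₂ (a β A₁ : ℝ) : ℝ :=
  2 / Real.sqrt (a * A₁ * (1 + β)) * K (κ₂ β)

set_option maxHeartbeats 1000000 in
/-- For each `β ∈ (0,1)` and each positive rational `q` there is a unique
`Â₁ ∈ (0, 1/(1+β))` with `q T₁(β,Â₁) = T₂(β,Â₁)`. -/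
theorem existsUnique_A₁ (a : ℝ) (ha : 0 < a) (β : ℝ) (hβ : β ∈ Set.Ioo (0:ℝ) 1)
    (q : ℚ) (hq : 0 < q) :
    ∃! A₁ : ℝ, A₁ ∈ Set.Ioo 0 (1 / (1 + β)) ∧ (q : ℝ) * T₁ a β A₁ = T₂ a β A₁ := by
  obtain ⟨hβ0, hβ1⟩ := hβ
  have h1β : (0:ℝ) < 1 + β := by linarith
  have hq0 : (0:ℝ) < (q:ℝ) := by exact_mod_cast hq
  set L : ℝ := 1 / (1 + β) with hLdef
  have hL0 : 0 < L := by positivity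
  -- κ₂ facts
  have hκ2lt : κ₂ β < 1 := by
    have h1 : β / (1 + β) < 1 := by rw [div_lt_one h1β]; linarith
    have h2 := Real.sqrt_lt_sqrt (by positivity : (0:ℝ) ≤ β / (1+β)) h1
    simpa [κ₂] using h2
  have hKκ2 : 0 < K (κ₂ β) := EllAux.K_pos (Real.sqrt_nonneg _) hκ2lt
  set c2 : ℝ := 2 * K (κ₂ β) with hc2def
  have hc2 : 0 < c2 := by rw [hc2def]; linarith
  -- the rescaled function g
  set g : ℝ → ℝ := fun A => (q:ℝ) * T₁ a β A * Real.sqrt (a * A * (1 + β)) with hgdef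
  -- equivalence of the equations
  have key : ∀ A : ℝ, 0 < A → (((q:ℝ) * T₁ a β A = T₂ a β A) ↔ g A = c2) := by
    intro A hA
    have hx : 0 < Real.sqrt (a * A * (1 + β)) := Real.sqrt_pos.2 (by positivity)
    rw [hgdef, hc2def]
    simp only
    rw [T₂, div_mul_eq_mul_div, eq_div_iff hx.ne']
  -- pointwise positivity facts
  have hsfact : ∀ A ∈ Set.Ioo (0:ℝ) L, 0 < 1 - 4 * β * A ^ 2 := fun A hA =>
    EllAux2.s_pos hβ0 hβ1 hA.1.le hA.2.le
  have hκlt : ∀ A ∈ Set.Ioo (0:ℝ) L, κ₁ β A < 1 := fun A hA =>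
    EllAux2.κ₁_lt_one hβ0 hβ1 hA.1.le hA.2
  have hKpos : ∀ A ∈ Set.Ioo (0:ℝ) L, 0 < K (κ₁ β A) := fun A hA =>
    EllAux.K_pos (Real.sqrt_nonneg _) (hκlt A hA)
  have hT₁pos : ∀ A ∈ Set.Ioo (0:ℝ) L, 0 < T₁ a β A := by
    intro A hA
    have hs := hsfact A hA
    have hP : 0 < (1 - 4 * β * A ^ 2) ^ ((1:ℝ)/4) := Real.rpow_pos_of_pos hs _
    have h2a : 0 < Real.sqrt (2 / a) := Real.sqrt_pos.2 (by positivity)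
    exact mul_pos (div_pos (by linarith) hP) (hKpos A hA)
  -- strict monotonicity of g
  have hgmono : StrictMonoOn g (Set.Ioo 0 L) := by
    intro A hA A' hA' hAA
    have hs := hsfact A hA
    have hs' := hsfact A' hA'
    have hP : (1 - 4 * β * A' ^ 2) ^ ((1:ℝ)/4) ≤ (1 - 4 * β * A ^ 2) ^ ((1:ℝ)/4) :=
      Real.rpow_le_rpow hs'.le (by nlinarith [mul_self_le_mul_self hA.1.le hAA.le])
        (by norm_num)
    have hP0 : 0 < (1 - 4 * β * A' ^ 2) ^ ((1:ℝ)/4) := Real.rpow_pos_of_pos hs' _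
    have hK1 : K (κ₁ β A) ≤ K (κ₁ β A') :=
      EllAux.K_mono (Real.sqrt_nonneg _) (EllAux2.κ₁_mono hβ0 hβ1 hA.1.le hAA.le hA'.2.le)
        (hκlt A' hA')
    have h2a : 0 < Real.sqrt (2 / a) := Real.sqrt_pos.2 (by positivity)
    have hT : (q:ℝ) * T₁ a β A ≤ (q:ℝ) * T₁ a β A' := by
      rw [T₁, T₁]
      have := hKpos A hA
      gcongr
    have hsqrt : Real.sqrt (a * A * (1 + β)) < Real.sqrt (a * A' * (1 + β)) :=
      Real.sqrt_lt_sqrt (mul_pos (mul_pos ha hA.1) h1β).le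
        (by nlinarith [mul_pos (mul_pos ha h1β) (sub_pos.2 hAA)])
    have hTpos : 0 < (q:ℝ) * T₁ a β A' := mul_pos hq0 (hT₁pos A' hA')
    exact mul_lt_mul' hT hsqrt (Real.sqrt_nonneg _) hTpos
  -- continuity of g
  have hgcont : ∀ A ∈ Set.Ioo (0:ℝ) L, ContinuousAt g A := by
    intro A hA
    have hs := hsfact A hA
    have hP : 0 < (1 - 4 * β * A ^ 2) ^ ((1:ℝ)/4) := Real.rpow_pos_of_pos hs _
    have hc1 : ContinuousAt (fun A : ℝ => (1 - 4 * β * A ^ 2) ^ ((1:ℝ)/4)) A :=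
      ContinuousAt.rpow_const (by fun_prop) (Or.inl hs.ne')
    have hKcont : ContinuousAt (fun A : ℝ => K (κ₁ β A)) A :=
      ContinuousAt.comp (g := K) (f := fun A : ℝ => κ₁ β A) (x := A)
        (EllAux.K_continuousAt (Real.sqrt_nonneg _) (hκlt A hA))
        (EllAux2.κ₁_continuousAt hs)
    have hT1cont : ContinuousAt (fun A : ℝ => T₁ a β A) A := by
      simp only [T₁]
      exact (continuousAt_const.div hc1 hP.ne').mul hKcont
    rw [hgdef]
    exact (continuousAt_const.mul hT1cont).mul (by fun_prop)
  -- upper bound near 0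
  have hL2mem : L / 2 ∈ Set.Ioo (0:ℝ) L := ⟨by positivity, by linarith⟩
  set KL : ℝ := K (κ₁ β (L/2)) with hKLdef
  have hKL0 : 0 < KL := hKpos _ hL2mem
  have hsL2 : 0 < 1 - 4 * β * (L/2) ^ 2 := hsfact _ hL2mem
  have hPL2 : 0 < (1 - 4 * β * (L/2) ^ 2) ^ ((1:ℝ)/4) := Real.rpow_pos_of_pos hsL2 _
  have h2a : 0 < Real.sqrt (2 / a) := Real.sqrt_pos.2 (by positivity)
  have haβ : 0 < Real.sqrt (a * (1 + β)) := Real.sqrt_pos.2 (by positivity)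
  set D0 : ℝ := (q:ℝ) * (2 * Real.sqrt (2/a) / (1 - 4 * β * (L/2) ^ 2) ^ ((1:ℝ)/4) * KL) *
    Real.sqrt (a * (1 + β)) with hD0def
  have hD0 : 0 < D0 := by
    apply mul_pos (mul_pos hq0 (mul_pos (div_pos (by linarith) hPL2) hKL0)) haβ
  have hbound : ∀ A, 0 < A → A ≤ L/2 → g A ≤ D0 * Real.sqrt A := by
    intro A h0 hL2
    have hAmem : A ∈ Set.Ioo (0:ℝ) L := ⟨h0, by linarith⟩
    have hsplit : Real.sqrt (a * A * (1+β)) = Real.sqrt (a * (1+β)) * Real.sqrt A := by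
      rw [show a * A * (1+β) = (a * (1+β)) * A by ring, Real.sqrt_mul (by positivity) A]
    have hT : (q:ℝ) * T₁ a β A ≤
        (q:ℝ) * (2 * Real.sqrt (2/a) / (1 - 4 * β * (L/2) ^ 2) ^ ((1:ℝ)/4) * KL) := by
      rw [T₁]
      have hK1 : K (κ₁ β A) ≤ KL := by
        rw [hKLdef]
        exact EllAux.K_mono (Real.sqrt_nonneg _)
          (EllAux2.κ₁_mono hβ0 hβ1 h0.le hL2 hL2mem.2.le) (hκlt _ hL2mem)
      have hP : (1 - 4 * β * (L/2) ^ 2) ^ ((1:ℝ)/4) ≤ (1 - 4 * β * A ^ 2) ^ ((1:ℝ)/4) :=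
        Real.rpow_le_rpow hsL2.le (by nlinarith [mul_self_le_mul_self h0.le hL2]) (by norm_num)
      have := hKpos A hAmem
      gcongr
    calc g A = ((q:ℝ) * T₁ a β A) * (Real.sqrt (a * (1+β)) * Real.sqrt A) := by
          rw [hgdef]; simp only; rw [hsplit]
      _ ≤ ((q:ℝ) * (2 * Real.sqrt (2/a) / (1 - 4 * β * (L/2) ^ 2) ^ ((1:ℝ)/4) * KL)) *
          (Real.sqrt (a * (1+β)) * Real.sqrt A) :=
          mul_le_mul_of_nonneg_right hT (by positivity)
      _ = D0 * Real.sqrt A := by rw [hD0def]; ring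
  set t : ℝ := min (L/2) ((c2 / (2 * D0)) ^ 2) with htdef
  have ht0 : 0 < t := lt_min (by linarith [hL2mem.1]) (by positivity)
  have htL2 : t ≤ L/2 := min_le_left _ _
  have hgt : g t < c2 := by
    have h1 : Real.sqrt t ≤ c2 / (2 * D0) := by
      have := Real.sqrt_le_sqrt (min_le_right (L/2) ((c2 / (2 * D0)) ^ 2))
      rwa [Real.sqrt_sq (by positivity)] at this
    have h2 := hbound t ht0 htL2
    have h3 : D0 * Real.sqrt t ≤ D0 * (c2 / (2 * D0)) :=
      mul_le_mul_of_nonneg_left h1 hD0.le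
    have h4 : D0 * (c2 / (2 * D0)) = c2 / 2 := by field_simp
    linarith
  -- lower bound near L
  set C1 : ℝ := (q:ℝ) * (2 * Real.sqrt (2/a)) * Real.sqrt (a * (1+β)) * Real.sqrt (L/2)
    with hC1def
  have hC1 : 0 < C1 := by
    apply mul_pos (mul_pos (mul_pos hq0 (by linarith)) haβ) (Real.sqrt_pos.2 hL2mem.1)
  set X : ℝ := 4 * (c2 + 1) / C1 with hXdef
  have hX : 0 < X := by positivity
  set c : ℝ := 1 - Real.exp (-X) with hcdef
  have hc0 : 0 < c := by
    have := Real.exp_lt_one_iff.2 (neg_lt_zero.2 hX)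
    rw [hcdef]; linarith
  have hc1 : c < 1 := by
    have := Real.exp_pos (-X)
    rw [hcdef]; linarith
  have hm1 : 2 - 1 / c ^ 2 < 1 := by
    have hcc : c ^ 2 < 1 := by nlinarith
    have h2 : 1 < 1 / c ^ 2 := by rw [lt_div_iff₀ (by positivity)]; linarith
    linarith
  -- choose s close to L
  have htends : Filter.Tendsto (fun A => EllAux2.E β A) (𝓝[<] L) (𝓝 1) := by
    have hsL : 0 < 1 - 4 * β * L ^ 2 := EllAux2.s_pos hβ0 hβ1 hL0.le le_rfl
    have hcontE := (EllAux2.E_continuousAt (β := β) hsL).continuousWithinAt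
      (s := Set.Iio L)
    have hEL : EllAux2.E β L = 1 := EllAux2.E_at_L hβ0 hβ1
    rw [ContinuousWithinAt, hEL] at hcontE
    exact hcontE
  have hev1 : ∀ᶠ A in 𝓝[<] L, 2 - 1 / c ^ 2 < EllAux2.E β A :=
    htends.eventually (eventually_gt_nhds hm1)
  have hev2 : ∀ᶠ A in 𝓝[<] L, A ∈ Set.Ioo (L/2) L :=
    Filter.eventually_of_mem (Ioo_mem_nhdsLT (by linarith)) fun x hx => hx
  obtain ⟨s, hsE, hsmem⟩ := (hev1.and hev2).exists
  have hsIoo : s ∈ Set.Ioo (0:ℝ) L := ⟨lt_trans hL2mem.1 hsmem.1, hsmem.2⟩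
  have hlower : c2 + 1 ≤ g s := by
    have hκs : κ₁ β s < 1 := hκlt s hsIoo
    have hκssq : κ₁ β s ^ 2 = EllAux2.E β s := EllAux2.κ₁_sq hβ0 hβ1 hsIoo.1.le hsIoo.2.le
    have hKs : Real.log (1 / (1 - c)) / 4 ≤ K (κ₁ β s) :=
      EllAux.K_ge_log hc0 hc1 (Real.sqrt_nonneg _) hκs (by rw [hκssq]; linarith)
    have hlog : Real.log (1 / (1 - c)) = X := by
      rw [hcdef]
      rw [show (1 : ℝ) - (1 - Real.exp (-X)) = Real.exp (-X) by ring]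
      rw [one_div, ← Real.exp_neg, Real.log_exp, neg_neg]
    rw [hlog] at hKs
    have hKspos : 0 < K (κ₁ β s) := hKpos s hsIoo
    have hss := hsfact s hsIoo
    have hPs0 : 0 < (1 - 4 * β * s ^ 2) ^ ((1:ℝ)/4) := Real.rpow_pos_of_pos hss _
    have hPs1 : (1 - 4 * β * s ^ 2) ^ ((1:ℝ)/4) ≤ 1 :=
      Real.rpow_le_one hss.le (by nlinarith [sq_nonneg s]) (by norm_num)
    have hT1s : 2 * Real.sqrt (2/a) * K (κ₁ β s) ≤ T₁ a β s := by
      rw [T₁]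
      exact mul_le_mul_of_nonneg_right (le_div_self (by linarith) hPs0 hPs1) hKspos.le
    have hsq_s : Real.sqrt (a * (1+β)) * Real.sqrt (L/2) ≤ Real.sqrt (a * s * (1+β)) := by
      rw [show a * s * (1+β) = (a * (1+β)) * s by ring, Real.sqrt_mul (by positivity) s]
      exact mul_le_mul_of_nonneg_left (Real.sqrt_le_sqrt (by linarith [hsmem.1]))
        (Real.sqrt_nonneg _)
    have hstep : ((q:ℝ) * (2 * Real.sqrt (2/a) * K (κ₁ β s))) *
        (Real.sqrt (a * (1+β)) * Real.sqrt (L/2)) ≤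
        ((q:ℝ) * T₁ a β s) * Real.sqrt (a * s * (1+β)) := by
      apply mul_le_mul (mul_le_mul_of_nonneg_left hT1s hq0.le) hsq_s (by positivity)
        (mul_nonneg hq0.le (hT₁pos s hsIoo).le)
    have heq1 : ((q:ℝ) * (2 * Real.sqrt (2/a) * K (κ₁ β s))) *
        (Real.sqrt (a * (1+β)) * Real.sqrt (L/2)) = C1 * K (κ₁ β s) := by
      rw [hC1def]; ring
    have heq2 : ((q:ℝ) * T₁ a β s) * Real.sqrt (a * s * (1+β)) = g s := by
      rw [hgdef]
    have hfin : C1 * (X / 4) ≤ C1 * K (κ₁ β s) :=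
      mul_le_mul_of_nonneg_left (by linarith) hC1.le
    have hCX : C1 * (X / 4) = c2 + 1 := by
      rw [hXdef]; field_simp
    linarith [hstep, heq1 ▸ hstep]
  -- intermediate value theorem
  have hts : t < s := lt_of_le_of_lt htL2 hsmem.1
  have hsub : Set.Icc t s ⊆ Set.Ioo (0:ℝ) L := fun x hx =>
    ⟨lt_of_lt_of_le ht0 hx.1, lt_of_le_of_lt hx.2 hsIoo.2⟩
  have hconts : ContinuousOn g (Set.Icc t s) := fun x hx =>
    (hgcont x (hsub hx)).continuousWithinAt
  have hmem : c2 ∈ Set.Icc (g t) (g s) := ⟨hgt.le, by linarith⟩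
  obtain ⟨A, hAmem, hAeq⟩ := intermediate_value_Icc hts.le hconts hmem
  refine ⟨A, ⟨hsub hAmem, (key A (hsub hAmem).1).2 hAeq⟩, ?_⟩
  intro y hy
  have hyIoo : y ∈ Set.Ioo (0:ℝ) L := hy.1
  have hyeq : g y = c2 := (key y hyIoo.1).1 hy.2
  exact hgmono.injOn hyIoo (hsub hAmem) (hyeq.trans hAeq.symm)
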